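/- Let ρ > 1, let f : ℂ → ℂ be complex-differentiable on the open interior of the Bernstein ellipse E_ρ, i.e. on the set {(z + z⁻¹)/2 : z ∈ ℂ, 1/ρ < |z| < ρ}, and suppose |f(w)| ≤ M for every w in this set. Define the Chebyshev coefficients a_0 := (1/π)·∫_0^π f(cos θ) dθ and a_k := (2/π)·∫_0^π f(cos θ)·cos(kθ) dθ for k ≥ 1. Then |a_0| ≤ M, |a_k| ≤ 2M·ρ^{−k} for every k ≥ 1, and for every n ≥ 0 and every x ∈ [−1, 1], |f(x) − ∑_{k=0}^{n} a_k·T_k(x)| ≤ 2M·ρ^{−n}/(ρ − 1). -/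

import Mathlib

open Real Polynomial Complex

/-- The open interior of the Bernstein ellipse `E_ρ`:
`{(z + z⁻¹)/2 : 1/ρ < |z| < ρ}`. -/
def BernsteinEllipseInterior (ρ : ℝ) : Set ℂ :=
  {w : ℂ | ∃ z : ℂ, 1 / ρ < ‖z‖ ∧ ‖z‖ < ρ ∧ w = (z + z⁻¹) / 2}

namespace TrefAux

/-- The transplanted function `F(z) = f((z+z⁻¹)/2)`. -/
noncomputable def tF (f : ℂ → ℂ) : ℂ → ℂ := fun z => f ((z + z⁻¹) / 2)

/-- The open annulus `1/ρ < |z| < ρ`. -/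
def tA (ρ : ℝ) : Set ℂ := {z : ℂ | 1 / ρ < ‖z‖ ∧ ‖z‖ < ρ}

/-- Scaled Fourier-Laurent integral. -/
noncomputable def tJ (f : ℂ → ℂ) (m : ℤ) (r : ℝ) : ℂ :=
  ∫ θ in (0:ℝ)..(2*π), Complex.exp (-(m:ℂ) * θ * Complex.I) * tF f ((r:ℂ) * Complex.exp (θ * Complex.I))

variable {ρ : ℝ} {M : ℝ} {f : ℂ → ℂ} {m : ℤ} {r s : ℝ}

lemma tF_inv (f : ℂ → ℂ) (z : ℂ) : tF f z⁻¹ = tF f z := by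
  simp [tF, inv_inv, add_comm]

lemma tF_exp (f : ℂ → ℂ) (θ : ℝ) :
    tF f (Complex.exp (θ * Complex.I)) = f ((Real.cos θ : ℝ) : ℂ) := by
  unfold tF
  congr 1
  rw [Complex.ofReal_cos, Complex.cos, ← Complex.exp_neg, neg_mul]

lemma tA_open : IsOpen (tA ρ) := by
  rw [tA, Set.setOf_and]
  exact (isOpen_lt continuous_const continuous_norm).inter
    (isOpen_lt continuous_norm continuous_const)

lemma tA_maps (hz : z ∈ tA ρ) : (z + z⁻¹) / 2 ∈ BernsteinEllipseInterior ρ := by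
  exact ⟨z, hz.1, hz.2, rfl⟩

lemma tA_one (hρ : 1 < ρ) : ∀ θ : ℝ, Complex.exp (θ * Complex.I) ∈ tA ρ := by
  intro θ
  have h1 : ‖Complex.exp (θ * Complex.I)‖ = 1 := Complex.norm_exp_ofReal_mul_I θ
  constructor <;> rw [h1]
  · exact (div_lt_one (lt_trans one_pos hρ)).2 hρ
  · exact hρ

lemma inv_rho_pos (hρ : 1 < ρ) : 0 < 1 / ρ := by positivity

lemma tA_ne_zero (hρ : 1 < ρ) (hz : z ∈ tA ρ) : z ≠ 0 := by
  intro h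
  rw [h] at hz
  have := hz.1
  simp only [norm_zero] at this
  exact absurd this (not_lt.2 (inv_rho_pos hρ).le)

lemma tF_diff (hρ : 1 < ρ) (hf : DifferentiableOn ℂ f (BernsteinEllipseInterior ρ))
    (hz : z ∈ tA ρ) : DifferentiableAt ℂ (tF f) z := by
  have hz0 : z ≠ 0 := tA_ne_zero hρ hz
  have hφ : DifferentiableAt ℂ (fun w : ℂ => (w + w⁻¹) / 2) z :=
    (differentiableAt_id.add (differentiableAt_inv hz0)).div_const 2
  have h1 : DifferentiableWithinAt ℂ f (BernsteinEllipseInterior ρ) ((z + z⁻¹) / 2) :=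
    hf _ (tA_maps hz)
  have h2 : DifferentiableWithinAt ℂ (tF f) (tA ρ) z :=
    h1.comp z hφ.differentiableWithinAt (fun w hw => tA_maps hw)
  exact h2.differentiableAt (tA_open.mem_nhds hz)

lemma tF_cont (hρ : 1 < ρ) (hf : DifferentiableOn ℂ f (BernsteinEllipseInterior ρ)) :
    ContinuousOn (tF f) (tA ρ) :=
  fun z hz => ((tF_diff hρ hf hz).continuousAt).continuousWithinAt

lemma tF_bound (hM : ∀ w ∈ BernsteinEllipseInterior ρ, ‖f w‖ ≤ M)
    (hz : z ∈ tA ρ) : ‖tF f z‖ ≤ M :=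
  hM _ (tA_maps hz)

lemma M_nonneg (hρ : 1 < ρ) (hM : ∀ w ∈ BernsteinEllipseInterior ρ, ‖f w‖ ≤ M) :
    0 ≤ M := by
  have h := hM 0 ⟨Complex.I, by simpa using (tA_one hρ 0).1, by simpa using (tA_one hρ 0).2,
    by simp [Complex.inv_I]⟩
  exact le_trans (norm_nonneg _) h

/-- circle integral expressed through `tJ`. -/
lemma circle_eq_tJ (hr : 0 < r) :
    (∮ z in C(0, r), tF f z * z ^ (-m - 1)) = Complex.I * (r:ℂ) ^ (-m) * tJ f m r := by
  rw [circleIntegral, tJ, ← intervalIntegral.integral_const_mul]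
  refine intervalIntegral.integral_congr fun θ _ => ?_
  have h0 : circleMap 0 r θ = (r:ℂ) * Complex.exp (θ * Complex.I) := by
    simp [circleMap]
  have hne : (r:ℂ) * Complex.exp (θ * Complex.I) ≠ 0 :=
    mul_ne_zero (by exact_mod_cast hr.ne') (Complex.exp_ne_zero _)
  rw [deriv_circleMap, h0, smul_eq_mul]
  have key : ((r:ℂ) * Complex.exp (θ * Complex.I)) ^ (-m - 1) *
      ((r:ℂ) * Complex.exp (θ * Complex.I)) =
      (r:ℂ) ^ (-m) * Complex.exp (-(m:ℂ) * θ * Complex.I) := by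
    rw [← zpow_add_one₀ hne, (by ring : -m - 1 + 1 = -m), mul_zpow]
    congr 1
    rw [← Complex.exp_int_mul]
    congr 1
    push_cast
    ring
  linear_combination (Complex.I * tF f ((r:ℂ) * Complex.exp (θ * Complex.I))) * key

/-- Contour deformation. -/
lemma contour (hρ : 1 < ρ) (hf : DifferentiableOn ℂ f (BernsteinEllipseInterior ρ))
    (hr : 1/ρ < r) (hrs : r ≤ s) (hs : s < ρ) :
    (r:ℂ) ^ (-m) * tJ f m r = (s:ℂ) ^ (-m) * tJ f m s := by
  have hr0 : 0 < r := lt_trans (inv_rho_pos hρ) hr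
  have hs0 : 0 < s := lt_of_lt_of_le hr0 hrs
  have hsub : ∀ z : ℂ, z ∈ Metric.closedBall 0 s \ Metric.ball 0 r → z ∈ tA ρ := by
    intro z hz
    obtain ⟨hz1, hz2⟩ := hz
    rw [Metric.mem_closedBall, dist_zero_right] at hz1
    rw [Metric.mem_ball, dist_zero_right, not_lt] at hz2
    exact ⟨lt_of_lt_of_le hr hz2, lt_of_le_of_lt hz1 hs⟩
  have hc : ContinuousOn (fun z => tF f z * z ^ (-m - 1))
      (Metric.closedBall 0 s \ Metric.ball 0 r) := by
    intro z hz
    have hzA := hsub z hz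
    have hz0 : z ≠ 0 := tA_ne_zero hρ hzA
    exact (((tF_diff hρ hf hzA).mul
      ((differentiableAt_zpow.2 (Or.inl hz0)))).continuousAt).continuousWithinAt
  have hd : ∀ z ∈ (Metric.ball 0 s \ Metric.closedBall 0 r) \ (∅ : Set ℂ),
      DifferentiableAt ℂ (fun z => tF f z * z ^ (-m - 1)) z := by
    intro z hz
    have hzA : z ∈ tA ρ := by
      refine hsub z ⟨Metric.ball_subset_closedBall hz.1.1, fun hzb => hz.1.2 ?_⟩
      exact Metric.ball_subset_closedBall hzb
    have hz0 : z ≠ 0 := tA_ne_zero hρ hzA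
    exact (tF_diff hρ hf hzA).mul (differentiableAt_zpow.2 (Or.inl hz0))
  have heq := Complex.circleIntegral_eq_of_differentiable_on_annulus_off_countable
    (c := 0) hr0 hrs Set.countable_empty hc hd
  rw [circle_eq_tJ hs0, circle_eq_tJ hr0] at heq
  rw [mul_assoc, mul_assoc] at heq
  exact (mul_left_cancel₀ Complex.I_ne_zero heq).symm

lemma tJ_one_eq (hρ : 1 < ρ) (hf : DifferentiableOn ℂ f (BernsteinEllipseInterior ρ))
    (hr : r ∈ Set.Ioo (1/ρ) ρ) :
    tJ f m 1 = (r:ℂ) ^ (-m) * tJ f m r := by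
  have h1 : (1:ℝ) ∈ Set.Ioo (1/ρ) ρ := ⟨(div_lt_one (lt_trans one_pos hρ)).2 hρ, hρ⟩
  rcases le_total r 1 with h | h
  · have := contour (m := m) hρ hf hr.1 h hρ
    rw [Complex.ofReal_one, one_zpow, one_mul] at this
    exact this.symm
  · have := contour (m := m) hρ hf h1.1 h hr.2
    rw [Complex.ofReal_one, one_zpow, one_mul] at this
    exact this

lemma tJ_norm_le (hρ : 1 < ρ) (hM : ∀ w ∈ BernsteinEllipseInterior ρ, ‖f w‖ ≤ M)
    (hr : r ∈ Set.Ioo (1/ρ) ρ) :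
    ‖tJ f m r‖ ≤ 2 * π * M := by
  have hπ := Real.pi_pos
  have hb : ∀ θ ∈ Set.uIoc (0:ℝ) (2*π),
      ‖Complex.exp (-(m:ℂ) * θ * Complex.I) * tF f ((r:ℂ) * Complex.exp (θ * Complex.I))‖ ≤ M := by
    intro θ _
    rw [norm_mul]
    have h1 : ‖Complex.exp (-(m:ℂ) * θ * Complex.I)‖ = 1 := by
      rw [(by push_cast; ring : -(m:ℂ) * θ * Complex.I = ((-(m * θ) : ℝ) : ℂ) * Complex.I)]
      exact Complex.norm_exp_ofReal_mul_I _
    rw [h1, one_mul]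
    have hmem : (r:ℂ) * Complex.exp (θ * Complex.I) ∈ tA ρ := by
      constructor
      · rw [norm_mul, Complex.norm_real, Real.norm_eq_abs, Complex.norm_exp_ofReal_mul_I, mul_one,
          abs_of_pos (lt_trans (inv_rho_pos hρ) hr.1)]
        exact hr.1
      · rw [norm_mul, Complex.norm_real, Real.norm_eq_abs, Complex.norm_exp_ofReal_mul_I, mul_one,
          abs_of_pos (lt_trans (inv_rho_pos hρ) hr.1)]
        exact hr.2
    exact tF_bound hM hmem
  have := intervalIntegral.norm_integral_le_of_norm_le_const hb
  rw [tJ]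
  calc ‖∫ θ in (0:ℝ)..(2*π),
        Complex.exp (-(m:ℂ) * θ * Complex.I) * tF f ((r:ℂ) * Complex.exp (θ * Complex.I))‖
      ≤ M * |2*π - 0| := this
    _ = 2 * π * M := by rw [sub_zero, abs_of_pos (by positivity)]; ring

lemma tJ_one_bound (hρ : 1 < ρ) (hf : DifferentiableOn ℂ f (BernsteinEllipseInterior ρ))
    (hM : ∀ w ∈ BernsteinEllipseInterior ρ, ‖f w‖ ≤ M)
    (hm : 0 ≤ m) :
    ‖tJ f m 1‖ ≤ 2 * π * M * ρ ^ (-m) := by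
  have hρ0 : (0:ℝ) < ρ := lt_trans one_pos hρ
  have hM0 : 0 ≤ M := M_nonneg hρ hM
  have hπ := Real.pi_pos
  have hev : ∀ᶠ r in nhdsWithin ρ (Set.Iio ρ),
      ‖tJ f m 1‖ ≤ 2 * π * M * r ^ (-m) := by
    filter_upwards [Ioo_mem_nhdsLT_of_mem (Set.mem_Ioc.2 ⟨hρ, le_refl ρ⟩)] with r hr
    have hmem : r ∈ Set.Ioo (1/ρ) ρ := ⟨lt_trans ((div_lt_one hρ0).2 hρ) hr.1, hr.2⟩
    have hr0 : 0 < r := lt_trans one_pos hr.1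
    rw [tJ_one_eq hρ hf hmem, norm_mul, norm_zpow, Complex.norm_real, Real.norm_eq_abs, abs_of_pos hr0]
    calc r ^ (-m) * ‖tJ f m r‖ ≤ r ^ (-m) * (2 * π * M) := by
          exact mul_le_mul_of_nonneg_left (tJ_norm_le hρ hM hmem) (zpow_nonneg hr0.le _)
      _ = 2 * π * M * r ^ (-m) := by ring
  have hlim : Filter.Tendsto (fun r : ℝ => 2 * π * M * r ^ (-m)) (nhdsWithin ρ (Set.Iio ρ))
      (nhds (2 * π * M * ρ ^ (-m))) :=
    (((continuousAt_zpow₀ ρ (-m) (Or.inl hρ0.ne')).tendsto).const_mul _).mono_left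
      nhdsWithin_le_nhds
  exact ge_of_tendsto hlim hev

lemma tJ_one_symm (f : ℂ → ℂ) (m : ℤ) : tJ f (-m) 1 = tJ f m 1 := by
  set u : ℝ → ℂ := fun θ =>
    Complex.exp (-(m:ℂ) * θ * Complex.I) * tF f (((1:ℝ):ℂ) * Complex.exp (θ * Complex.I)) with hu
  have hper : Function.Periodic u (2*π) := by
    intro θ
    have h1 : Complex.exp (((θ + 2*π : ℝ) : ℂ) * Complex.I) = Complex.exp (θ * Complex.I) := by
      push_cast
      rw [add_mul, Complex.exp_add, Complex.exp_two_pi_mul_I, mul_one]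
    have h2 : Complex.exp (-(m:ℂ) * (θ + 2*π : ℝ) * Complex.I)
        = Complex.exp (-(m:ℂ) * θ * Complex.I) := by
      have : -(m:ℂ) * (θ + 2*π : ℝ) * Complex.I
          = -(m:ℂ) * θ * Complex.I + ((-m : ℤ) : ℂ) * (2 * (π:ℂ) * Complex.I) := by
        push_cast; ring
      rw [this, Complex.exp_add, Complex.exp_int_mul_two_pi_mul_I, mul_one]
    simp only [hu, h1, h2]
  have hrev : ∀ θ : ℝ, Complex.exp (-((-m : ℤ):ℂ) * θ * Complex.I) *
      tF f (((1:ℝ):ℂ) * Complex.exp (θ * Complex.I)) = u (-θ) := by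
    intro θ
    simp only [hu]
    have h1 : (((-θ : ℝ)):ℂ) * Complex.I = -(θ * Complex.I) := by push_cast; ring
    have h2 : tF f (((1:ℝ):ℂ) * Complex.exp (((-θ : ℝ):ℂ) * Complex.I))
        = tF f (((1:ℝ):ℂ) * Complex.exp (θ * Complex.I)) := by
      rw [h1, Complex.exp_neg]
      rw [show ((1:ℝ):ℂ) * (Complex.exp (θ * Complex.I))⁻¹
          = (((1:ℝ):ℂ) * Complex.exp (θ * Complex.I))⁻¹ by push_cast; simp]
      exact tF_inv f _
    rw [h2]
    congr 2
    push_cast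
    ring
  rw [tJ, tJ]
  calc (∫ θ in (0:ℝ)..(2*π), Complex.exp (-((-m : ℤ):ℂ) * θ * Complex.I) *
        tF f (((1:ℝ):ℂ) * Complex.exp (θ * Complex.I)))
      = ∫ θ in (0:ℝ)..(2*π), u (-θ) := by
        refine intervalIntegral.integral_congr fun θ _ => ?_
        exact hrev θ
    _ = ∫ θ in (-(2*π))..(-(0:ℝ)), u θ := intervalIntegral.integral_comp_neg u
    _ = ∫ θ in (-(2*π))..(-(2*π) + 2*π), u θ := by norm_num
    _ = ∫ θ in (0:ℝ)..(0 + 2*π), u θ := hper.intervalIntegral_add_eq (-(2*π)) 0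
    _ = ∫ θ in (0:ℝ)..(2*π), u θ := by norm_num

end TrefAux

/-- **Trefethen's theorem** (Theorem 3.10): if `f` is analytic in the interior
of the Bernstein ellipse `E_ρ` and bounded there by `M`, then its Chebyshev
coefficients satisfy `|a₀| ≤ M`, `|a_k| ≤ 2M ρ^{-k}`, and the degree-`n`
Chebyshev truncation is `(2M ρ^{-n}/(ρ-1))`-close to `f` on `[-1, 1]`. -/
theorem trefethen (ρ : ℝ) (hρ : 1 < ρ) (M : ℝ) (f : ℂ → ℂ)
    (hf : DifferentiableOn ℂ f (BernsteinEllipseInterior ρ))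
    (hM : ∀ w ∈ BernsteinEllipseInterior ρ, ‖f w‖ ≤ M)
    (a : ℕ → ℂ)
    (ha0 : a 0 = (1 / (π : ℂ)) * ∫ θ in (0 : ℝ)..π, f ((Real.cos θ : ℝ) : ℂ))
    (hak : ∀ k : ℕ, 1 ≤ k →
      a k = (2 / (π : ℂ)) *
        ∫ θ in (0 : ℝ)..π, f ((Real.cos θ : ℝ) : ℂ) * ((Real.cos (k * θ) : ℝ) : ℂ)) :
    ‖a 0‖ ≤ M ∧
    (∀ k : ℕ, 1 ≤ k → ‖a k‖ ≤ 2 * M * ρ ^ (-(k : ℤ))) ∧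
    (∀ n : ℕ, ∀ x : ℝ, x ∈ Set.Icc (-1 : ℝ) 1 →
      ‖f ((x : ℝ) : ℂ) -
          ∑ k ∈ Finset.range (n + 1),
            a k * (((Polynomial.Chebyshev.T ℝ (k : ℤ)).eval x : ℝ) : ℂ)‖ ≤
        2 * M * ρ ^ (-(n : ℤ)) / (ρ - 1)) := by
  classical
  have hρ0 : (0:ℝ) < ρ := lt_trans one_pos hρ
  have hπ : (0:ℝ) < π := Real.pi_pos
  have hπc : ((π:ℝ):ℂ) ≠ 0 := Complex.ofReal_ne_zero.2 Real.pi_ne_zero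
  have hM0 : 0 ≤ M := TrefAux.M_nonneg hρ hM
  haveI : Fact ((0:ℝ) < 2*π) := ⟨by positivity⟩
  have hFh : ∀ θ : ℝ, TrefAux.tF f (((1:ℝ):ℂ) * Complex.exp (θ * Complex.I))
      = f ((Real.cos θ : ℝ) : ℂ) := by
    intro θ
    rw [Complex.ofReal_one, one_mul, TrefAux.tF_exp]
  have hcont : Continuous fun θ : ℝ => f ((Real.cos θ : ℝ) : ℂ) := by
    have h1 : Continuous fun θ : ℝ => Complex.exp ((θ:ℂ) * Complex.I) := by continuity
    have h2 := (TrefAux.tF_cont hρ hf).comp_continuous h1 (TrefAux.tA_one hρ)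
    have h3 : (fun θ : ℝ => TrefAux.tF f (Complex.exp ((θ:ℂ) * Complex.I)))
        = fun θ : ℝ => f ((Real.cos θ : ℝ) : ℂ) := by
      funext θ
      exact TrefAux.tF_exp f θ
    exact h2.congr fun θ => TrefAux.tF_exp f θ
  have hend : f ((Real.cos 0 : ℝ) : ℂ) = f ((Real.cos (2*π) : ℝ) : ℂ) := by
    rw [Real.cos_zero, Real.cos_two_pi]
  set G : C(AddCircle (2*π), ℂ) :=
    ⟨AddCircle.liftIco (2*π) 0 (fun θ : ℝ => f ((Real.cos θ : ℝ) : ℂ)),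
      AddCircle.liftIco_zero_continuous hend hcont.continuousOn⟩ with hG
  have hGcoe : ∀ y : ℝ, y ∈ Set.Ico (0:ℝ) (2*π) →
      G ((y : ℝ) : AddCircle (2*π)) = f ((Real.cos y : ℝ) : ℂ) := by
    intro y hy
    simp only [hG, ContinuousMap.coe_mk]
    exact AddCircle.liftIco_zero_coe_apply hy
  set c : ℤ → ℂ := fourierCoeff ⇑G with hc
  have key1 : ∀ m : ℤ, c m = (1/(2*(π:ℂ))) * TrefAux.tJ f m 1 := by
    intro m
    rw [hc, fourierCoeff_eq_intervalIntegral (⇑G) m 0, zero_add]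
    have hGh : ∀ y ∈ Set.uIcc (0:ℝ) (2*π),
        (fourier (-m) ((y:ℝ) : AddCircle (2*π))) • G ((y:ℝ) : AddCircle (2*π))
        = Complex.exp (-(m:ℂ) * y * Complex.I) *
          TrefAux.tF f (((1:ℝ):ℂ) * Complex.exp (y * Complex.I)) := by
      intro y hy
      rw [Set.uIcc_of_le (by positivity)] at hy
      have hGy : G ((y:ℝ) : AddCircle (2*π)) = f ((Real.cos y : ℝ) : ℂ) := by
        rcases lt_or_eq_of_le hy.2 with hlt | heq
        · exact hGcoe y ⟨hy.1, hlt⟩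
        · rw [heq]
          have hper : ((2*π : ℝ) : AddCircle (2*π)) = ((0:ℝ) : AddCircle (2*π)) := by
            rw [AddCircle.coe_period, QuotientAddGroup.mk_zero]
          rw [hper, hGcoe 0 ⟨le_refl 0, by positivity⟩, ← heq]
          rw [heq, ← hend]
      rw [hGy, smul_eq_mul, hFh y]
      congr 1
      rw [fourier_coe_apply]
      congr 1
      push_cast
      field_simp
    rw [intervalIntegral.integral_congr hGh, TrefAux.tJ]
    rw [Complex.real_smul]
    congr 1
    push_cast
    ring
  have htJ1 : ∀ m : ℤ, TrefAux.tJ f m 1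
      = ∫ θ in (0:ℝ)..(2*π), Complex.exp (-(m:ℂ) * θ * Complex.I) * f ((Real.cos θ : ℝ) : ℂ) := by
    intro m
    rw [TrefAux.tJ]
    exact intervalIntegral.integral_congr fun θ _ => by rw [hFh θ]
  have hsymm : ∀ m : ℤ, c (-m) = c m := by
    intro m
    rw [key1, key1, TrefAux.tJ_one_symm]
  have habs : ∀ m : ℤ, 0 ≤ m → ‖c m‖ ≤ M * ρ ^ (-m) := by
    intro m hm
    rw [key1, norm_mul]
    have h1 : ‖1/(2*(π:ℂ))‖ = 1/(2*π) := by
      rw [norm_div, norm_one, norm_mul, Complex.norm_two, Complex.norm_real, Real.norm_eq_abs, abs_of_pos hπ]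
    rw [h1]
    calc (1/(2*π)) * ‖TrefAux.tJ f m 1‖
        ≤ (1/(2*π)) * (2*π*M*ρ^(-m)) :=
          mul_le_mul_of_nonneg_left (TrefAux.tJ_one_bound hρ hf hM hm) (by positivity)
      _ = M * ρ^(-m) := by field_simp
  have hck : ∀ k : ℕ, c (k:ℤ) = (1/(π:ℂ)) *
      ∫ θ in (0:ℝ)..π, f ((Real.cos θ : ℝ) : ℂ) * ((Real.cos (k * θ) : ℝ) : ℂ) := by
    intro k
    have hwcont : Continuous fun θ : ℝ =>
        f ((Real.cos θ : ℝ) : ℂ) * ((Real.cos (k * θ) : ℝ) : ℂ) :=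
      hcont.mul (Complex.continuous_ofReal.comp
        (Real.continuous_cos.comp (continuous_const.mul continuous_id)))
    have hecont : ∀ m : ℤ, Continuous fun θ : ℝ =>
        Complex.exp (-(m:ℂ) * θ * Complex.I) * f ((Real.cos θ : ℝ) : ℂ) := by
      intro m
      exact (Complex.continuous_exp.comp (by continuity)).mul hcont
    have hpoint : ∀ θ : ℝ, Complex.exp (-((k:ℤ):ℂ) * θ * Complex.I) * f ((Real.cos θ : ℝ) : ℂ)
        + Complex.exp (-(((-(k:ℤ) : ℤ)):ℂ) * θ * Complex.I) * f ((Real.cos θ : ℝ) : ℂ)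
        = 2 * (f ((Real.cos θ : ℝ) : ℂ) * ((Real.cos (k * θ) : ℝ) : ℂ)) := by
      intro θ
      have hcos : ((Real.cos (k * θ) : ℝ) : ℂ) = Complex.cos ((k * θ : ℝ) : ℂ) :=
        Complex.ofReal_cos _
      rw [hcos, Complex.cos]
      have h1 : -((k:ℤ):ℂ) * θ * Complex.I = -(((k * θ : ℝ):ℂ) * Complex.I) := by
        push_cast; ring
      have h2 : -(((-(k:ℤ) : ℤ)):ℂ) * θ * Complex.I = ((k * θ : ℝ):ℂ) * Complex.I := by
        push_cast; ring
      rw [h1, h2]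
      ring
    have hadd : TrefAux.tJ f (k:ℤ) 1 + TrefAux.tJ f (-(k:ℤ)) 1
        = 2 * ∫ θ in (0:ℝ)..(2*π),
            f ((Real.cos θ : ℝ) : ℂ) * ((Real.cos (k * θ) : ℝ) : ℂ) := by
      rw [htJ1, htJ1, ← intervalIntegral.integral_add ((hecont _).intervalIntegrable _ _)
        ((hecont _).intervalIntegrable _ _), ← intervalIntegral.integral_const_mul]
      exact intervalIntegral.integral_congr fun θ _ => hpoint θ
    have hrefl : (∫ θ in (0:ℝ)..(2*π),
          f ((Real.cos θ : ℝ) : ℂ) * ((Real.cos (k * θ) : ℝ) : ℂ))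
        = 2 * ∫ θ in (0:ℝ)..π,
            f ((Real.cos θ : ℝ) : ℂ) * ((Real.cos (k * θ) : ℝ) : ℂ) := by
      have hsplit := intervalIntegral.integral_add_adjacent_intervals
        (a := (0:ℝ)) (b := π) (c := 2*π)
        (μ := MeasureTheory.volume)
        (f := fun θ : ℝ => f ((Real.cos θ : ℝ) : ℂ) * ((Real.cos (k * θ) : ℝ) : ℂ))
        (hwcont.intervalIntegrable _ _) (hwcont.intervalIntegrable _ _)
      have hw : ∀ y : ℝ, f ((Real.cos (2*π - y) : ℝ) : ℂ) * ((Real.cos (k * (2*π - y)) : ℝ) : ℂ)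
          = f ((Real.cos y : ℝ) : ℂ) * ((Real.cos (k * y) : ℝ) : ℂ) := by
        intro y
        have hA : Real.cos (2*π - y) = Real.cos y := Real.cos_two_pi_sub y
        have hB : Real.cos ((k:ℝ) * (2*π - y)) = Real.cos ((k:ℝ) * y) := by
          have harg : (k:ℝ) * (2*π - y) = ((k:ℤ):ℝ) * (2*π) - (k:ℝ) * y := by
            push_cast; ring
          rw [harg, Real.cos_int_mul_two_pi_sub]
        rw [hA, hB]
      have h2 : (∫ θ in π..(2*π), f ((Real.cos θ : ℝ) : ℂ) * ((Real.cos (k * θ) : ℝ) : ℂ))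
          = ∫ θ in (0:ℝ)..π, f ((Real.cos θ : ℝ) : ℂ) * ((Real.cos (k * θ) : ℝ) : ℂ) := by
        have hcomp := intervalIntegral.integral_comp_sub_left (a := (0:ℝ)) (b := π)
          (fun θ : ℝ => f ((Real.cos θ : ℝ) : ℂ) * ((Real.cos (k * θ) : ℝ) : ℂ)) (2*π)
        calc (∫ θ in π..(2*π), f ((Real.cos θ : ℝ) : ℂ) * ((Real.cos (k * θ) : ℝ) : ℂ))
            = ∫ θ in (2*π - π)..(2*π - 0),
                f ((Real.cos θ : ℝ) : ℂ) * ((Real.cos (k * θ) : ℝ) : ℂ) := by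
              rw [(by ring : 2*π - π = π), (by ring : 2*π - (0:ℝ) = 2*π)]
          _ = ∫ θ in (0:ℝ)..π,
                f ((Real.cos (2*π - θ) : ℝ) : ℂ) * ((Real.cos (k * (2*π - θ)) : ℝ) : ℂ) :=
              hcomp.symm
          _ = ∫ θ in (0:ℝ)..π, f ((Real.cos θ : ℝ) : ℂ) * ((Real.cos (k * θ) : ℝ) : ℂ) :=
              intervalIntegral.integral_congr fun θ _ => hw θ
      rw [← hsplit, h2]
      ring
    have h2ck : 2 * c (k:ℤ) = 2 * ((1/(π:ℂ)) *
        ∫ θ in (0:ℝ)..π, f ((Real.cos θ : ℝ) : ℂ) * ((Real.cos (k * θ) : ℝ) : ℂ)) := by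
      have hdup : 2 * c (k:ℤ) = c (k:ℤ) + c (-(k:ℤ)) := by rw [hsymm]; ring
      rw [hdup, key1, key1, ← mul_add, hadd, hrefl]
      field_simp
    exact mul_left_cancel₀ two_ne_zero h2ck
  have hgeo : ∀ k : ℕ, ρ ^ (-(k:ℤ)) = (ρ⁻¹) ^ k := by
    intro k
    rw [zpow_neg, ← inv_zpow, zpow_natCast]
  have ha0c : a 0 = c 0 := by
    rw [ha0, (by exact_mod_cast rfl : (0:ℤ) = ((0:ℕ):ℤ)), hck 0]
    congr 1
    refine intervalIntegral.integral_congr fun θ _ => ?_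
    norm_num
  have hakc : ∀ k : ℕ, 1 ≤ k → a k = 2 * c (k:ℤ) := by
    intro k hk
    rw [hak k hk, hck k]
    ring
  refine ⟨?_, ?_, ?_⟩
  · -- part 1
    rw [ha0c]
    have := habs 0 le_rfl
    rwa [neg_zero, zpow_zero, mul_one] at this
  · -- part 2
    intro k hk
    rw [hakc k hk, norm_mul, Complex.norm_two]
    calc 2 * ‖c (k:ℤ)‖ ≤ 2 * (M * ρ^(-(k:ℤ))) :=
          mul_le_mul_of_nonneg_left (habs k (Int.natCast_nonneg k)) (by norm_num)
      _ = 2 * M * ρ^(-(k:ℤ)) := by ring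
  · -- part 3
    intro n x hx
    have hθ0 : 0 ≤ Real.arccos x := Real.arccos_nonneg x
    have hθπ : Real.arccos x ≤ π := Real.arccos_le_pi x
    have hcosθ : Real.cos (Real.arccos x) = x := Real.cos_arccos hx.1 hx.2
    set θ : ℝ := Real.arccos x with hθdef
    have hgeo2 : Summable (fun j : ℕ => M * (ρ⁻¹) ^ j) :=
      (summable_geometric_of_lt_one (by positivity) (inv_lt_one_of_one_lt₀ hρ)).mul_left M
    have hnormc : ∀ m : ℤ, ‖c m‖ ≤ M * ρ ^ (-|m|) := by
      intro m
      rcases le_or_gt 0 m with hm | hm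
      · rw [abs_of_nonneg hm]
        exact habs m hm
      · rw [abs_of_neg hm]
        have hcc : c m = c (-(-m)) := by rw [neg_neg]
        rw [hcc, hsymm (-m)]
        exact habs (-m) (by omega)
    have hsumnorm : Summable (fun m : ℤ => M * ρ ^ (-|m|)) := by
      apply Summable.of_nat_of_neg
      · exact hgeo2.congr fun j => by rw [Int.abs_natCast, hgeo j]
      · exact hgeo2.congr fun j => by rw [abs_neg, Int.abs_natCast, hgeo j]
    have hsumc : Summable c :=
      Summable.of_norm_bounded hsumnorm fun m => by
        exact hnormc m
    have habsexp : ∀ m : ℤ, ‖Complex.exp ((m:ℂ) * θ * Complex.I)‖ = 1 := by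
      intro m
      rw [(by push_cast; ring : (m:ℂ) * θ * Complex.I = ((m * θ : ℝ) : ℂ) * Complex.I)]
      exact Complex.norm_exp_ofReal_mul_I _
    set u : ℤ → ℂ := fun m => c m * Complex.exp ((m:ℂ) * θ * Complex.I) with hu
    have hunorm : ∀ m : ℤ, ‖u m‖ = ‖c m‖ := by
      intro m
      rw [hu]
      simp only []
      rw [norm_mul, habsexp m, mul_one]
    have husum : HasSum u (f ((x:ℝ):ℂ)) := by
      have h0 := has_pointwise_sum_fourier_series_of_summable (T := 2*π) (f := G)
        hsumc ((θ : ℝ) : AddCircle (2*π))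
      have hGθ : G ((θ:ℝ) : AddCircle (2*π)) = f ((x:ℝ):ℂ) := by
        rw [hGcoe θ ⟨hθ0, lt_of_le_of_lt hθπ (by linarith)⟩, hcosθ]
      rw [hGθ] at h0
      have hfun : (fun i : ℤ => fourierCoeff (⇑G) i • fourier i ((θ:ℝ) : AddCircle (2*π))) = u := by
        funext i
        rw [smul_eq_mul, fourier_coe_apply, hu]
        congr 1
        congr 1
        push_cast
        field_simp
      rwa [hfun] at h0
    set v : ℕ → ℂ := fun j => u (j:ℤ) + u (-(j:ℤ)) with hv
    have hvsum : HasSum v (f ((x:ℝ):ℂ) + u 0) := husum.nat_add_neg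
    have hu0 : u 0 = a 0 := by
      rw [hu]
      simp only [Int.cast_zero, zero_mul, Complex.exp_zero, mul_one]
      exact ha0c.symm
    have hTk : ∀ k : ℕ, (((Polynomial.Chebyshev.T ℝ (k:ℤ)).eval x : ℝ) : ℂ)
        = ((Real.cos (k * θ) : ℝ) : ℂ) := by
      intro k
      rw [← hcosθ, Polynomial.Chebyshev.T_real_cos]
      push_cast
      ring
    have hvk : ∀ k : ℕ, 1 ≤ k → v k = a k * ((Real.cos (k * θ) : ℝ) : ℂ) := by
      intro k hk
      simp only [hv, hu]
      rw [hsymm (k:ℤ), hakc k hk]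
      have hcos : ((Real.cos (k * θ) : ℝ) : ℂ) = Complex.cos ((k * θ : ℝ) : ℂ) :=
        Complex.ofReal_cos _
      have e1 : (((k:ℤ)):ℂ) * θ * Complex.I = ((k * θ : ℝ) : ℂ) * Complex.I := by
        push_cast; ring
      have e2 : ((-(k:ℤ) : ℤ):ℂ) * θ * Complex.I = -(((k * θ : ℝ) : ℂ) * Complex.I) := by
        push_cast; ring
      rw [e1, e2, hcos, Complex.cos]
      ring
    have hsum_split := Summable.sum_add_tsum_nat_add (f := v) (n+1) hvsum.summable
    rw [hvsum.tsum_eq] at hsum_split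
    have hP : (∑ i ∈ Finset.range (n+1), v i)
        = (∑ k ∈ Finset.range (n+1), a k * ((Real.cos (k * θ) : ℝ) : ℂ)) + a 0 := by
      have hdiff : ∑ i ∈ Finset.range (n+1),
          (v i - a i * ((Real.cos (i * θ) : ℝ) : ℂ)) = a 0 := by
        rw [Finset.sum_eq_single_of_mem 0 (Finset.mem_range.2 (Nat.succ_pos n))]
        · simp only [hv, hu]
          push_cast
          simp only [Int.cast_zero, Nat.cast_zero, zero_mul, neg_zero, Complex.exp_zero,
            mul_one, Real.cos_zero, Complex.ofReal_one]
          rw [ha0c, Complex.cos_zero]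
          ring
        · intro b _ hb
          rw [hvk b (Nat.one_le_iff_ne_zero.2 hb)]
          ring
      rw [Finset.sum_sub_distrib] at hdiff
      linear_combination hdiff
    have htail : f ((x:ℝ):ℂ)
        - (∑ k ∈ Finset.range (n+1), a k * ((Real.cos (k * θ) : ℝ) : ℂ))
        = ∑' j : ℕ, v (j + (n+1)) := by
      rw [hP, hu0] at hsum_split
      linear_combination -hsum_split
    have hvb : ∀ j : ℕ, ‖v (j + (n+1))‖ ≤ 2*M*ρ⁻¹^(n+1) * ρ⁻¹^j := by
      intro j
      have hk1 : ‖c ((j + (n+1) : ℕ) : ℤ)‖ ≤ M * ρ⁻¹^(j + (n+1)) := by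
        have := hnormc ((j + (n+1) : ℕ) : ℤ)
        rwa [Int.abs_natCast, hgeo (j + (n+1))] at this
      have hk2 : ‖c (-((j + (n+1) : ℕ) : ℤ))‖ ≤ M * ρ⁻¹^(j + (n+1)) := by
        rw [hsymm]
        exact hk1
      calc ‖v (j + (n+1))‖ ≤ ‖u ((j + (n+1) : ℕ) : ℤ)‖ + ‖u (-((j + (n+1) : ℕ) : ℤ))‖ :=
            norm_add_le _ _
        _ ≤ M * ρ⁻¹^(j + (n+1)) + M * ρ⁻¹^(j + (n+1)) := by
            rw [hunorm, hunorm]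
            exact add_le_add hk1 hk2
        _ = 2*M*ρ⁻¹^(n+1) * ρ⁻¹^j := by
            rw [pow_add]
            ring
    have hBsum : Summable (fun j : ℕ => 2*M*ρ⁻¹^(n+1) * ρ⁻¹^j) :=
      (summable_geometric_of_lt_one (by positivity) (inv_lt_one_of_one_lt₀ hρ)).mul_left _
    have hvnormsum : Summable (fun j : ℕ => ‖v (j + (n+1))‖) :=
      Summable.of_nonneg_of_le (fun j => norm_nonneg _) hvb hBsum
    have hb1 : ‖∑' j : ℕ, v (j + (n+1))‖ ≤ ∑' j : ℕ, ‖v (j + (n+1))‖ :=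
      norm_tsum_le_tsum_norm hvnormsum
    have hb2 : (∑' j : ℕ, ‖v (j + (n+1))‖) ≤ ∑' j : ℕ, 2*M*ρ⁻¹^(n+1) * ρ⁻¹^j :=
      Summable.tsum_le_tsum hvb hvnormsum hBsum
    have hb3 : (∑' j : ℕ, 2*M*ρ⁻¹^(n+1) * ρ⁻¹^j) = (2*M*ρ⁻¹^(n+1)) * (1 - ρ⁻¹)⁻¹ := by
      rw [tsum_mul_left, tsum_geometric_of_lt_one (by positivity) (inv_lt_one_of_one_lt₀ hρ)]
    have hfinal : (2*M*ρ⁻¹^(n+1)) * (1 - ρ⁻¹)⁻¹ = 2 * M * ρ ^ (-(n:ℤ)) / (ρ - 1) := by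
      rw [hgeo n, pow_succ]
      have hρ1 : ρ - 1 ≠ 0 := sub_ne_zero_of_ne hρ.ne'
      have hρinv : 1 - ρ⁻¹ ≠ 0 := by
        have : ρ⁻¹ < 1 := inv_lt_one_of_one_lt₀ hρ
        intro hcon
        rw [sub_eq_zero] at hcon
        exact absurd hcon.symm this.ne
      field_simp
    have hsum_rw : (∑ k ∈ Finset.range (n+1),
          a k * (((Polynomial.Chebyshev.T ℝ (k:ℤ)).eval x : ℝ) : ℂ))
        = ∑ k ∈ Finset.range (n+1), a k * ((Real.cos (k * θ) : ℝ) : ℂ) :=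
      Finset.sum_congr rfl fun k _ => by rw [hTk k]
    rw [hsum_rw, htail]
    calc ‖∑' j : ℕ, v (j + (n+1))‖ ≤ ∑' j : ℕ, ‖v (j + (n+1))‖ := hb1
      _ ≤ ∑' j : ℕ, 2*M*ρ⁻¹^(n+1) * ρ⁻¹^j := hb2
      _ = (2*M*ρ⁻¹^(n+1)) * (1 - ρ⁻¹)⁻¹ := hb3
      _ = 2 * M * ρ ^ (-(n:ℤ)) / (ρ - 1) := hfinal
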